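/- Let G be a k-regular mixed graph on n vertices equipped with an η-function, with time evolution matrix U_θ. If G is periodic (i.e., U_θ^τ = I for some positive integer τ), then k divides 2n, i.e., 2n/k ∈ ℤ. -/

import Mathlib

/-- The reverse of an arc. -/
def arcRev {α : Type*} (a : α × α) : α × α := (a.2, a.1)

/-- The set of symmetric arcs 𝒜⁺ = 𝒜 ∪ 𝒜⁻¹ of a mixed graph given by its arc set. -/
def symArcs {n : ℕ} (A : Finset (Fin n × Fin n)) : Finset (Fin n × Fin n) :=
  A ∪ A.image arcRev

/-- The degree of a vertex in the underlying graph of a mixed graph. -/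
def mixedDeg {n : ℕ} (A : Finset (Fin n × Fin n)) (x : Fin n) : ℕ :=
  ((symArcs A).filter (fun a => a.1 = x)).card

/-- The η-function θ of a mixed graph: η on 𝒜 \ 𝒜⁻¹, -η on 𝒜⁻¹ \ 𝒜, 0 on 𝒜 ∩ 𝒜⁻¹. -/
def etaFun {n : ℕ} (A : Finset (Fin n × Fin n)) (η : ℝ) (a : Fin n × Fin n) : ℝ :=
  if a ∈ A then (if arcRev a ∈ A then 0 else η) else -η

/-- The time evolution matrix U_θ of a mixed graph equipped with an η-function,
given entrywise by (U_θ)_{a,b} = e^{-iθ(a)} (2/deg t(b) · δ_{o(a),t(b)} - δ_{a,b⁻¹}). -/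
noncomputable def timeEvo {n : ℕ} (A : Finset (Fin n × Fin n)) (η : ℝ) :
    Matrix {a // a ∈ symArcs A} {a // a ∈ symArcs A} ℂ :=
  fun a b => Complex.exp (-(etaFun A η a.1) * Complex.I) *
    ((2 / (mixedDeg A b.1.2 : ℂ)) * (if a.1.1 = b.1.2 then 1 else 0) -
      (if a.1 = arcRev b.1 then 1 else 0))

open Polynomial Matrix in
/-- Evaluating the characteristic polynomial gives a determinant. -/
lemma charpoly_eval_aux {m : Type*} [Fintype m] [DecidableEq m] (M : Matrix m m ℂ) (r : ℂ) :
    M.charpoly.eval r = (r • (1 : Matrix m m ℂ) - M).det := by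
  rw [Matrix.charpoly, eval_det, Matrix.matPolyEquiv_charmatrix]
  rw [eval_sub, eval_X, eval_C, Matrix.scalar_apply, smul_one_eq_diagonal]

open Polynomial Matrix in
/-- Roots of the characteristic polynomial of a matrix of finite order are roots of unity. -/
lemma root_pow_one_aux {m : Type*} [Fintype m] [DecidableEq m] (M : Matrix m m ℂ) {τ : ℕ}
    (hM : M ^ τ = 1) {z : ℂ} (hz : z ∈ M.charpoly.roots) : z ^ τ = 1 := by
  have hroot : M.charpoly.eval z = 0 := (Polynomial.isRoot_of_mem_roots hz)
  have hdet : (z • (1 : Matrix m m ℂ) - M).det = 0 := by rw [← charpoly_eval_aux]; exact hroot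
  obtain ⟨v, hv, hmv⟩ := (Matrix.exists_mulVec_eq_zero_iff).mpr hdet
  have hMv : M.mulVec v = z • v := by
    rw [Matrix.sub_mulVec, Matrix.smul_mulVec, Matrix.one_mulVec, sub_eq_zero] at hmv
    exact hmv.symm
  have hpow : ∀ j, (M ^ j).mulVec v = z ^ j • v := by
    intro j
    induction j with
    | zero => simp [Matrix.one_mulVec]
    | succ j ih =>
      rw [pow_succ, ← Matrix.mulVec_mulVec, hMv, Matrix.mulVec_smul, ih, smul_smul, pow_succ,
        mul_comm]
  have hτ := hpow τ
  rw [hM, Matrix.one_mulVec] at hτ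
  obtain ⟨i, hi⟩ := Function.ne_iff.mp hv
  have h2 : v i = z ^ τ * v i := congrFun hτ i
  have h3 : (z ^ τ - 1) * v i = 0 := by linear_combination -h2
  rcases mul_eq_zero.mp h3 with h | h
  · exact sub_eq_zero.mp h
  · exact absurd h hi

open Polynomial Matrix in
/-- The eigenvalues of the square of a matrix are the squares of its eigenvalues. -/
lemma roots_charpoly_sq_aux {m : Type*} [Fintype m] [DecidableEq m] (M : Matrix m m ℂ) :
    (M ^ 2).charpoly.roots = M.charpoly.roots.map (fun z => z ^ 2) := by
  set R := M.charpoly.roots with hR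
  have hsplits : M.charpoly.Splits := IsAlgClosed.splits M.charpoly
  have hcard : R.card = Fintype.card m := by
    rw [hR, (Polynomial.splits_iff_card_roots).mp hsplits, Matrix.charpoly_natDegree_eq_dim]
  have hprod : M.charpoly = (R.map fun a => X - C a).prod :=
    hsplits.eq_prod_roots_of_monic M.charpoly_monic
  have heval : ∀ x : ℂ, M.charpoly.eval x = (R.map fun z => x - z).prod := by
    intro x
    rw [hprod, Polynomial.eval_multiset_prod, Multiset.map_map]
    simp
  have hplus : ∀ x : ℂ, (x • (1 : Matrix m m ℂ) + M).det = (R.map fun z => x + z).prod := by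
    intro x
    have h1 : x • (1 : Matrix m m ℂ) + M = (-1 : ℂ) • ((-x) • (1 : Matrix m m ℂ) - M) := by
      rw [neg_one_smul, neg_sub, neg_smul, sub_neg_eq_add, add_comm]
    have h2 : (R.map fun z => x + z) = ((R.map fun z => -x - z).map Neg.neg) := by
      rw [Multiset.map_map]
      apply Multiset.map_congr rfl
      intro z _
      simp
      ring
    rw [h1, Matrix.det_smul, ← charpoly_eval_aux, heval, h2, Multiset.prod_map_neg,
      Multiset.card_map, hcard]
  have key : (M ^ 2).charpoly = ((R.map fun z => z ^ 2).map fun a => X - C a).prod := by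
    apply Polynomial.funext
    intro y
    obtain ⟨x, hx⟩ := IsAlgClosed.exists_pow_nat_eq y (n := 2) (by norm_num)
    have hfac : y • (1 : Matrix m m ℂ) - M ^ 2
        = (x • (1 : Matrix m m ℂ) - M) * (x • (1 : Matrix m m ℂ) + M) := by
      rw [sub_mul, mul_add, mul_add, smul_mul_assoc, smul_mul_assoc, one_mul, one_mul,
        mul_smul_comm, mul_one, smul_smul, pow_two, ← hx, pow_two]
      abel
    rw [charpoly_eval_aux, hfac, Matrix.det_mul, ← charpoly_eval_aux, heval, hplus,
      Polynomial.eval_multiset_prod, Multiset.map_map, Multiset.map_map, ← Multiset.prod_map_mul]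
    congr 1
    apply Multiset.map_congr rfl
    intro z _
    simp only [Function.comp_apply, eval_sub, eval_X, eval_C]
    rw [← hx]; ring
  rw [key, Polynomial.roots_multiset_prod_X_sub_C]

/-- A sum of algebraic integers is an algebraic integer. -/
lemma multiset_sum_integral_aux (s : Multiset ℂ) (h : ∀ z ∈ s, IsIntegral ℤ z) :
    IsIntegral ℤ s.sum := by
  induction s using Multiset.induction_on with
  | empty => simpa using isIntegral_zero
  | cons a s ih =>
    rw [Multiset.sum_cons]
    exact (h a (Multiset.mem_cons_self a s)).add
      (ih fun z hz => h z (Multiset.mem_cons_of_mem hz))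

/-- Newton-style identity: the square of a sum of algebraic integers equals the sum of
squares plus twice an algebraic integer. -/
lemma pairsum_aux (s : Multiset ℂ) (h : ∀ z ∈ s, IsIntegral ℤ z) :
    ∃ w : ℂ, IsIntegral ℤ w ∧ s.sum ^ 2 = (s.map fun z => z ^ 2).sum + 2 * w := by
  induction s using Multiset.induction_on with
  | empty => exact ⟨0, isIntegral_zero, by simp⟩
  | cons a s ih =>
    obtain ⟨w, hw, hrec⟩ := ih fun z hz => h z (Multiset.mem_cons_of_mem hz)
    have ha : IsIntegral ℤ a := h a (Multiset.mem_cons_self a s)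
    have hs : IsIntegral ℤ s.sum :=
      multiset_sum_integral_aux s fun z hz => h z (Multiset.mem_cons_of_mem hz)
    refine ⟨w + a * s.sum, hw.add (ha.mul hs), ?_⟩
    rw [Multiset.sum_cons, Multiset.map_cons, Multiset.sum_cons]
    linear_combination hrec

/-- A rational number that is an algebraic integer (as a complex number) is an integer. -/
lemma rat_of_integral_aux (q : ℚ) (h : IsIntegral ℤ (q : ℂ)) : ∃ m : ℤ, (m : ℚ) = q := by
  have hinj : Function.Injective (algebraMap ℚ ℂ).toIntAlgHom := by
    intro a b hab
    simpa [RingHom.toIntAlgHom, eq_ratCast] using hab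
  have h2 : IsIntegral ℤ q := by
    rw [← isIntegral_algHom_iff (algebraMap ℚ ℂ).toIntAlgHom hinj]
    simpa [RingHom.toIntAlgHom, eq_ratCast] using h
  exact IsIntegrallyClosed.isIntegral_iff.mp h2

lemma arcRev_arcRev {α : Type*} (a : α × α) : arcRev (arcRev a) = a := rfl

lemma mem_symArcs {n : ℕ} {A : Finset (Fin n × Fin n)} {a : Fin n × Fin n} :
    a ∈ symArcs A ↔ a ∈ A ∨ arcRev a ∈ A := by
  simp only [symArcs, Finset.mem_union, Finset.mem_image]
  constructor
  · rintro (h | ⟨b, hb, rfl⟩)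
    · exact Or.inl h
    · exact Or.inr (by rwa [arcRev_arcRev])
  · rintro (h | h)
    · exact Or.inl h
    · exact Or.inr ⟨arcRev a, h, rfl⟩

lemma arcRev_mem_symArcs {n : ℕ} {A : Finset (Fin n × Fin n)} {a : Fin n × Fin n}
    (h : a ∈ symArcs A) : arcRev a ∈ symArcs A := by
  rw [mem_symArcs] at h ⊢
  rw [arcRev_arcRev]
  tauto

lemma ne_of_mem_symArcs {n : ℕ} {A : Finset (Fin n × Fin n)}
    (hirr : ∀ x : Fin n, (x, x) ∉ A) {a : Fin n × Fin n}
    (h : a ∈ symArcs A) : a.1 ≠ a.2 := by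
  obtain ⟨x, y⟩ := a
  rw [mem_symArcs] at h
  intro he
  simp only at he
  subst he
  simp only [arcRev, or_self] at h
  exact hirr x h

lemma etaFun_add_rev {n : ℕ} {A : Finset (Fin n × Fin n)} {η : ℝ} {a : Fin n × Fin n}
    (h : a ∈ symArcs A) : etaFun A η a + etaFun A η (arcRev a) = 0 := by
  rw [mem_symArcs] at h
  by_cases h1 : a ∈ A <;> by_cases h2 : arcRev a ∈ A <;>
    simp [etaFun, h1, h2, arcRev_arcRev] <;> tauto

lemma card_symArcs {n k : ℕ} {A : Finset (Fin n × Fin n)}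
    (hreg : ∀ x : Fin n, mixedDeg A x = k) : (symArcs A).card = n * k := by
  rw [Finset.card_eq_sum_card_fiberwise (f := fun a => a.1) (t := Finset.univ)
    (fun a _ => Finset.mem_univ _)]
  have h2 : ∑ b : Fin n, (Finset.filter (fun a => a.1 = b) (symArcs A)).card
      = ∑ _b : Fin n, k := Finset.sum_congr rfl fun x _ => hreg x
  rw [h2]
  simp [mul_comm]

lemma even_card_symArcs {n : ℕ} {A : Finset (Fin n × Fin n)}
    (hirr : ∀ x : Fin n, (x, x) ∉ A) : Even ((symArcs A).card) := by
  classical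
  have hsplit := Finset.card_filter_add_card_filter_not
    (s := symArcs A) (p := fun a => a.1 < a.2)
  have hbij : ((symArcs A).filter fun a => a.1 < a.2).card
      = ((symArcs A).filter fun a => ¬ a.1 < a.2).card := by
    apply Finset.card_bij (fun a _ => arcRev a)
    · intro a ha
      rw [Finset.mem_filter] at ha ⊢
      exact ⟨arcRev_mem_symArcs ha.1, lt_asymm ha.2⟩
    · intro a _ b _ hab
      have := congrArg arcRev hab
      rwa [arcRev_arcRev, arcRev_arcRev] at this
    · intro b hb
      rw [Finset.mem_filter] at hb
      obtain ⟨hbS, hnot⟩ := hb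
      have hne := ne_of_mem_symArcs hirr hbS
      have hlt : b.2 < b.1 := lt_of_le_of_ne (not_lt.mp hnot) hne.symm
      refine ⟨arcRev b, ?_, (arcRev_arcRev b).symm⟩
      rw [Finset.mem_filter]
      exact ⟨arcRev_mem_symArcs hbS, hlt⟩
  refine ⟨((symArcs A).filter fun a => a.1 < a.2).card, ?_⟩
  omega

lemma trace_timeEvo {n k : ℕ} (A : Finset (Fin n × Fin n))
    (hirr : ∀ x : Fin n, (x, x) ∉ A) (η : ℝ)
    (hreg : ∀ x : Fin n, mixedDeg A x = k) :
    Matrix.trace (timeEvo A η) = 0 := by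
  rw [Matrix.trace]
  apply Finset.sum_eq_zero
  intro a _
  have h1 : a.1.1 ≠ a.1.2 := ne_of_mem_symArcs hirr a.2
  have h2 : a.1 ≠ arcRev a.1 := by
    intro h
    exact h1 (congrArg Prod.fst h)
  simp [Matrix.diag, timeEvo, h1, h2]

lemma trace_timeEvo_sq {n k : ℕ} (A : Finset (Fin n × Fin n))
    (hirr : ∀ x : Fin n, (x, x) ∉ A) (η : ℝ)
    (hreg : ∀ x : Fin n, mixedDeg A x = k) :
    Matrix.trace (timeEvo A η ^ 2) = (n * k : ℂ) * (2 / (k : ℂ) - 1) ^ 2 := by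
  rw [pow_two, Matrix.trace]
  have hdiag : ∀ a : {a // a ∈ symArcs A},
      (timeEvo A η * timeEvo A η).diag a = (2 / (k : ℂ) - 1) ^ 2 := by
    intro a
    set b₀ : {a // a ∈ symArcs A} := ⟨arcRev a.1, arcRev_mem_symArcs a.2⟩ with hb₀
    rw [Matrix.diag_apply, Matrix.mul_apply]
    rw [Finset.sum_eq_single b₀]
    · have e1 : a.1.1 = b₀.1.2 := rfl
      have e2 : a.1 = arcRev b₀.1 := (arcRev_arcRev a.1).symm
      have e3 : b₀.1.1 = a.1.2 := rfl
      have e4 : b₀.1 = arcRev a.1 := rfl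
      have hexp : Complex.exp (-(etaFun A η a.1) * Complex.I) *
          Complex.exp (-(etaFun A η (arcRev a.1)) * Complex.I) = 1 := by
        rw [← Complex.exp_add]
        have h0 : ((etaFun A η a.1 : ℂ)) + ((etaFun A η (arcRev a.1) : ℂ)) = 0 := by
          exact_mod_cast congrArg (fun t : ℝ => (t : ℂ)) (etaFun_add_rev a.2)
        rw [show -(etaFun A η a.1 : ℂ) * Complex.I + -(etaFun A η (arcRev a.1) : ℂ) * Complex.I
          = -(((etaFun A η a.1 : ℂ) + (etaFun A η (arcRev a.1) : ℂ)) * Complex.I) by ring, h0]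
        simp
      simp only [timeEvo, if_pos e1, if_pos e2, if_pos e3, if_pos e4, hreg]
      rw [mul_mul_mul_comm, hexp, one_mul]
      ring
    · intro b _ hbne
      have hne1 : ¬ a.1 = arcRev b.1 := by
        intro h
        apply hbne
        apply Subtype.ext
        rw [show (b₀ : {a // a ∈ symArcs A}).1 = arcRev a.1 from rfl, h, arcRev_arcRev]
      have hne2 : ¬ b.1 = arcRev a.1 := fun h => hbne (Subtype.ext h)
      by_cases h3 : a.1.1 = b.1.2
      · by_cases h4 : b.1.1 = a.1.2
        · exfalso
          exact hne2 (Prod.ext h4 h3.symm)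
        · simp [timeEvo, hne1, hne2, h4]
      · simp [timeEvo, hne1, hne2, h3]
    · intro h
      exact absurd (Finset.mem_univ b₀) h
  rw [Finset.sum_congr rfl (fun a _ => hdiag a), Finset.sum_const, Finset.card_univ,
    Fintype.card_coe, card_symArcs hreg]
  simp [nsmul_eq_mul]

/-- a periodic k-regular mixed graph on n vertices satisfies k ∣ 2n. -/
theorem regular_periodic_dvd (n k : ℕ) (hk : 1 ≤ k)
    (A : Finset (Fin n × Fin n)) (hirr : ∀ x : Fin n, (x, x) ∉ A) (η : ℝ)
    (hreg : ∀ x : Fin n, mixedDeg A x = k)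
    (hper : ∃ τ : ℕ, 0 < τ ∧ timeEvo A η ^ τ = 1) :
    k ∣ 2 * n := by
  classical
  obtain ⟨τ, hτ, hUτ⟩ := hper
  set M := timeEvo A η with hM
  set R := M.charpoly.roots with hR
  have hint : ∀ z ∈ R, IsIntegral ℤ z := by
    intro z hz
    have h1 : z ^ τ = 1 := root_pow_one_aux M hUτ hz
    refine ⟨Polynomial.X ^ τ - Polynomial.C 1, Polynomial.monic_X_pow_sub_C 1 (by omega), ?_⟩
    simp [h1]
  have hsum : R.sum = 0 := by
    rw [hR, ← Matrix.trace_eq_sum_roots_charpoly]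
    exact trace_timeEvo A hirr η hreg
  have hsq : (R.map fun z => z ^ 2).sum = (n * k : ℂ) * (2 / (k : ℂ) - 1) ^ 2 := by
    rw [hR, ← roots_charpoly_sq_aux, ← Matrix.trace_eq_sum_roots_charpoly]
    exact trace_timeEvo_sq A hirr η hreg
  obtain ⟨w, hw, heq⟩ := pairsum_aux R hint
  rw [hsum, hsq] at heq
  have hkC : (k : ℂ) ≠ 0 := Nat.cast_ne_zero.mpr (by omega)
  set wq : ℚ := 2 * n - (n * k) / 2 - 2 * n / k with hwqdef
  have hwq : (wq : ℂ) = w := by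
    have h1 : (2 : ℂ) * (wq : ℂ) = 2 * w := by
      have h2 : (2 : ℂ) * w = -((n * k : ℂ) * (2 / (k : ℂ) - 1) ^ 2) := by
        linear_combination -heq
      rw [h2, hwqdef]
      push_cast
      field_simp
      ring
    exact mul_left_cancel₀ two_ne_zero h1
  obtain ⟨mz, hmz⟩ := rat_of_integral_aux wq (by rw [hwq]; exact hw)
  obtain ⟨c, hc⟩ := even_card_symArcs hirr
  rw [card_symArcs hreg] at hc
  have hkQ : (k : ℚ) ≠ 0 := Nat.cast_ne_zero.mpr (by omega)
  have hnkQ : ((n : ℚ) * k) = 2 * c := by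
    have : (n * k : ℕ) = 2 * c := by omega
    exact_mod_cast this
  set t : ℤ := 2 * n - c - mz with htdef
  have ht : (2 * n : ℚ) = t * k := by
    have key : (2 * n : ℚ) / k = 2 * n - c - wq := by
      rw [hwqdef]
      have expand : (2 * (n:ℚ) - (c:ℚ)) - (2 * n - (n * k) / 2 - 2 * n / k)
          = 2 * (n:ℚ) / k + ((n:ℚ) * k / 2 - c) := by ring
      rw [expand]
      linear_combination (-1 / 2 : ℚ) * hnkQ
    have h3 : (2 * n : ℚ) / k = (t : ℚ) := by
      rw [key, ← hmz, htdef]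
      push_cast
      ring
    rw [← h3, div_mul_cancel₀ _ hkQ]
  have htZ : (2 * n : ℤ) = t * k := by exact_mod_cast ht
  have : (k : ℤ) ∣ ((2 * n : ℕ) : ℤ) := ⟨t, by push_cast; linarith⟩
  exact_mod_cast this
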